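/- In a single-controller Markov game where the stage payoffs satisfy r^j(s, ã^j, a^{-j}) - r^j(s, a) = r^i(s, ã^j, a^{-j}) - r^i(s, a) for all s, a, ã^j and all j ≠ i (with i the controller), if Q_k^i and Q_k^j both follow the closed-form iteration Q_{k+1}^m(s,a) = r^m(s,a) ∑_{l=0}^k β_l ∏_{m'=l+1}^k (1-β_{m'}) + γ ∑_{s'} p(s'|s,a^i) ∑_{l=0}^k v_l^m(s') β_l ∏_{m'=l+1}^k (1-β_{m'}), then for every mixed profile π(s) and every best-response action b^j of player j: E_{a∼π(s)}[Q_k^i(s, b^j, a^{-j}) - Q_k^i(s,a)] = E_{a∼π(s)}[r^j(s, b^j, a^{-j}) - r^j(s,a)] · ∑_{l=0}^{k-1} β_l ∏_{m'=l+1}^{k-1} (1-β_{m'}) + γ·0, i.e., Γ_k^{ij}(s) equals the stage-payoff improvement scaled by the cumulative step-size weight, and in particular Γ_k^{ij}(s) ≥ 0 when b^j maximizes player j's expected payoff. -/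

import Mathlib

open Finset

theorem single_controller_potential_gamma
    (S Ai Aj Ao : Type*) [Fintype S] [Fintype Ai] [Fintype Aj] [Fintype Ao]
    (γ : ℝ) (hγ : 0 ≤ γ ∧ γ < 1)
    (β : ℕ → ℝ) (hβ : ∀ k, 0 < β k ∧ β k < 1)
    (ri rj : S → Ai × Aj × Ao → ℝ)
    -- potential-game-like condition: player i is the single controller and
    -- unilateral deviations of player j change r^i and r^j identically
    (hpot : ∀ s (ai : Ai) (aj aj2 : Aj) (ao : Ao),
      rj s (ai, aj2, ao) - rj s (ai, aj, ao) = ri s (ai, aj2, ao) - ri s (ai, aj, ao))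
    (p : S → Ai → S → ℝ)
    (vi vj : ℕ → S → ℝ)
    (Qi Qj : ℕ → S → Ai × Aj × Ao → ℝ)
    (hQi0 : ∀ s a, Qi 0 s a = 0) (hQj0 : ∀ s a, Qj 0 s a = 0)
    -- closed-form unrolled iterations with common r^m, p, β but local value estimates
    (hQi : ∀ k s a, Qi (k + 1) s a =
      ri s a * ∑ l ∈ range (k + 1), β l * ∏ m' ∈ Icc (l + 1) k, (1 - β m')
        + γ * ∑ s', p s a.1 s' *
            ∑ l ∈ range (k + 1), vi l s' * β l * ∏ m' ∈ Icc (l + 1) k, (1 - β m'))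
    (hQj : ∀ k s a, Qj (k + 1) s a =
      rj s a * ∑ l ∈ range (k + 1), β l * ∏ m' ∈ Icc (l + 1) k, (1 - β m')
        + γ * ∑ s', p s a.1 s' *
            ∑ l ∈ range (k + 1), vj l s' * β l * ∏ m' ∈ Icc (l + 1) k, (1 - β m'))
    (πi : S → Ai → ℝ) (πj : S → Aj → ℝ) (πo : S → Ao → ℝ)
    (hπi_nonneg : ∀ s ai, 0 ≤ πi s ai) (hπi_sum : ∀ s, ∑ ai, πi s ai = 1)
    (hπj_nonneg : ∀ s aj, 0 ≤ πj s aj) (hπj_sum : ∀ s, ∑ aj, πj s aj = 1)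
    (hπo_nonneg : ∀ s ao, 0 ≤ πo s ao) (hπo_sum : ∀ s, ∑ ao, πo s ao = 1) :
    ∀ (k : ℕ) (s : S) (bj : Aj),
      (∑ ai, ∑ aj, ∑ ao, πi s ai * πj s aj * πo s ao *
          (Qi (k + 1) s (ai, bj, ao) - Qi (k + 1) s (ai, aj, ao))
        = (∑ ai, ∑ aj, ∑ ao, πi s ai * πj s aj * πo s ao *
              (rj s (ai, bj, ao) - rj s (ai, aj, ao)))
            * ∑ l ∈ range (k + 1), β l * ∏ m' ∈ Icc (l + 1) k, (1 - β m') + γ * 0) ∧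
      ((∀ aj' : Aj,
          ∑ ai, ∑ ao, πi s ai * πo s ao * Qj (k + 1) s (ai, aj', ao)
            ≤ ∑ ai, ∑ ao, πi s ai * πo s ao * Qj (k + 1) s (ai, bj, ao)) →
        0 ≤ ∑ ai, ∑ aj, ∑ ao, πi s ai * πj s aj * πo s ao *
            (Qi (k + 1) s (ai, bj, ao) - Qi (k + 1) s (ai, aj, ao))) := by
  intro k s bj
  have hdiffi : ∀ (ai : Ai) (aj : Aj) (ao : Ao),
      Qi (k + 1) s (ai, bj, ao) - Qi (k + 1) s (ai, aj, ao)
        = (rj s (ai, bj, ao) - rj s (ai, aj, ao))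
            * ∑ l ∈ range (k + 1), β l * ∏ m' ∈ Icc (l + 1) k, (1 - β m') := by
    intro ai aj ao
    rw [hQi, hQi, hpot s ai aj bj ao]
    ring
  have hdiffj : ∀ (ai : Ai) (aj : Aj) (ao : Ao),
      Qj (k + 1) s (ai, bj, ao) - Qj (k + 1) s (ai, aj, ao)
        = (rj s (ai, bj, ao) - rj s (ai, aj, ao))
            * ∑ l ∈ range (k + 1), β l * ∏ m' ∈ Icc (l + 1) k, (1 - β m') := by
    intro ai aj ao
    rw [hQj, hQj]
    ring
  constructor
  · simp only [hdiffi, Finset.sum_mul, mul_zero, add_zero]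
    exact Finset.sum_congr rfl fun ai _ => Finset.sum_congr rfl fun aj _ =>
      Finset.sum_congr rfl fun ao _ => by ring
  · intro hbr
    simp only [hdiffi]
    rw [Finset.sum_comm]
    refine Finset.sum_nonneg fun aj _ => ?_
    have h2 : 0 ≤ ∑ ai, ∑ ao, πi s ai * πo s ao *
        ((rj s (ai, bj, ao) - rj s (ai, aj, ao))
          * ∑ l ∈ range (k + 1), β l * ∏ m' ∈ Icc (l + 1) k, (1 - β m')) := by
      have h1 := sub_nonneg.mpr (hbr aj)
      rw [← Finset.sum_sub_distrib] at h1
      simp only [← Finset.sum_sub_distrib] at h1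
      refine le_trans h1 (le_of_eq ?_)
      refine Finset.sum_congr rfl fun ai _ => Finset.sum_congr rfl fun ao _ => ?_
      rw [← hdiffj ai aj ao]
      ring
    have key : ∑ ai, ∑ ao, πi s ai * πj s aj * πo s ao *
        ((rj s (ai, bj, ao) - rj s (ai, aj, ao))
          * ∑ l ∈ range (k + 1), β l * ∏ m' ∈ Icc (l + 1) k, (1 - β m'))
        = πj s aj * ∑ ai, ∑ ao, πi s ai * πo s ao *
        ((rj s (ai, bj, ao) - rj s (ai, aj, ao))
          * ∑ l ∈ range (k + 1), β l * ∏ m' ∈ Icc (l + 1) k, (1 - β m')) := by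
      rw [Finset.mul_sum]
      refine Finset.sum_congr rfl fun ai _ => ?_
      rw [Finset.mul_sum]
      refine Finset.sum_congr rfl fun ao _ => ?_
      ring
    rw [key]
    exact mul_nonneg (hπj_nonneg s aj) h2
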